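/- arXiv:2203.07871 — 3 statements merged into one kernel-verified Lean document; each statement's English description precedes it below -/
import Mathlib

section
/- For any fixed constant A > 0 and any positive integer n, ∑_{d ∣ n} μ²(d) A^{ω(d)} / φ(d) ≪ (log log 3n)^A, where the implied constant depends only on A. -/
open ArithmeticFunction
open Finset Nat


theorem totient_prod_primes : ∀ {t : Finset ℕ}, (∀ p ∈ t, p.Prime) →
    (∏ p ∈ t, p).totient = ∏ p ∈ t, (p - 1) := by
  classical
  intro t
  induction t using Finset.induction with
  | empty => simp
  | @insert a s ha ih =>
    intro ht
    rw [Finset.prod_insert ha, Finset.prod_insert ha]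
    have hap : a.Prime := ht a (Finset.mem_insert_self a s)
    have hcop : Nat.Coprime a (∏ p ∈ s, p) := by
      apply Nat.Coprime.prod_right
      intro p hp
      exact (Nat.coprime_primes hap (ht p (Finset.mem_insert_of_mem hp))).mpr
        (fun h => ha (h ▸ hp))
    rw [Nat.totient_mul hcop, Nat.totient_prime hap, ih (fun p hp => ht p (Finset.mem_insert_of_mem hp))]

theorem sum_eq_prod (A : ℝ) {n : ℕ} (hn : n ≠ 0) :
    (∑ d ∈ n.divisors, ((moebius d : ℝ)) ^ 2 * A ^ d.primeFactors.card / (Nat.totient d : ℝ))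
      = ∏ p ∈ n.primeFactors, (1 + A / ((p:ℝ) - 1)) := by
  classical
  have h1 : (∑ d ∈ n.divisors, ((moebius d : ℝ)) ^ 2 * A ^ d.primeFactors.card / (Nat.totient d : ℝ))
      = ∑ d ∈ n.divisors.filter Squarefree, A ^ d.primeFactors.card / (Nat.totient d : ℝ) := by
    rw [Finset.sum_filter]
    refine Finset.sum_congr rfl fun d _ => ?_
    by_cases hd : Squarefree d
    · rw [if_pos hd]
      have h := moebius_sq_eq_one_of_squarefree hd
      have h' : ((moebius d : ℝ)) ^ 2 = 1 := by exact_mod_cast congrArg (fun z : ℤ => (z:ℝ)) h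
      rw [h', one_mul]
    · rw [if_neg hd, moebius_eq_zero_of_not_squarefree hd]
      simp
  rw [h1, Nat.sum_divisors_filter_squarefree hn]
  have h2 : (UniqueFactorizationMonoid.normalizedFactors n).toFinset = n.primeFactors := by
    rw [Nat.factors_eq]
    simp
  rw [h2]
  have h3 : ∀ t ∈ n.primeFactors.powerset,
      A ^ (t.val.prod).primeFactors.card / ((t.val.prod).totient : ℝ)
        = ∏ p ∈ t, (A / ((p:ℝ) - 1)) := by
    intro t ht
    rw [Finset.mem_powerset] at ht
    have hprime : ∀ p ∈ t, p.Prime := fun p hp => Nat.prime_of_mem_primeFactors (ht hp)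
    rw [t.prod_val]
    have hpf : (∏ p ∈ t, p).primeFactors = t := Nat.primeFactors_prod hprime
    rw [Function.id_def]  -- maybe not needed
    rw [hpf, totient_prod_primes hprime]
    rw [Finset.prod_div_distrib, Finset.prod_const]
    congr 1
    rw [Nat.cast_prod]
    refine Finset.prod_congr rfl fun p hp => ?_
    have : 1 ≤ p := (hprime p hp).one_lt.le
    push_cast [Nat.cast_sub this]
    ring
  rw [Finset.sum_congr rfl h3]
  have h4 := Finset.prod_add (fun p : ℕ => A / ((p:ℝ) - 1)) (fun _ => (1:ℝ)) n.primeFactors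
  simp only [Finset.prod_const_one, mul_one] at h4
  rw [← h4]
  exact Finset.prod_congr rfl fun p _ => by ring

-- each p^(N/p) divides N!
theorem pow_div_dvd_factorial {N p : ℕ} (hp : p.Prime) (hN : 1 ≤ N) :
    p ^ (N / p) ∣ N ! := by
  rw [Nat.Prime.pow_dvd_factorial_iff hp (lt_succ_of_le (Nat.log_le_self p N))]
  calc N / p = N / p ^ 1 := by rw [pow_one]
    _ ≤ ∑ i ∈ Finset.Ico 1 (N + 1), N / p ^ i := by
        apply Finset.single_le_sum (f := fun i => N / p ^ i)
        · intro i _; exact Nat.zero_le _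
        · simp [Finset.mem_Ico]; omega

theorem chebyshev_log_weighted (N : ℕ) (hN : 1 ≤ N) :
    ∑ p ∈ (N + 1).primesBelow, Real.log p / p ≤ Real.log N + Real.log 4 := by
  have hNR : (0:ℝ) < N := by exact_mod_cast hN
  -- the product of p^(N/p) divides N!
  have hdvd : (∏ p ∈ (N + 1).primesBelow, p ^ (N / p)) ∣ N ! := by
    have hZ : (∏ p ∈ (N + 1).primesBelow, ((p : ℤ)) ^ (N / p)) ∣ (N ! : ℤ) := by
      apply Finset.prod_dvd_of_coprime
      · intro p hp q hq hpq
        have hpp := Nat.prime_of_mem_primesBelow hp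
        have hqp := Nat.prime_of_mem_primesBelow hq
        exact IsCoprime.pow (Nat.Coprime.isCoprime ((Nat.coprime_primes hpp hqp).mpr hpq))
      · intro p hp
        exact_mod_cast Int.natCast_dvd_natCast.mpr
          (pow_div_dvd_factorial (Nat.prime_of_mem_primesBelow hp) hN)
    have : ((∏ p ∈ (N + 1).primesBelow, p ^ (N / p) : ℕ) : ℤ) ∣ (N ! : ℤ) := by
      push_cast
      exact hZ
    exact_mod_cast this
  have hle : (∏ p ∈ (N + 1).primesBelow, p ^ (N / p)) ≤ N ! :=
    Nat.le_of_dvd (Nat.factorial_pos N) hdvd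
  -- take logs
  have hlog1 : ∑ p ∈ (N + 1).primesBelow, ((N / p : ℕ) : ℝ) * Real.log p ≤ Real.log (N !) := by
    have h0 : ∀ p ∈ (N + 1).primesBelow, ((p : ℝ)) ^ (N / p) ≠ 0 := by
      intro p hp
      exact pow_ne_zero _ (Nat.cast_ne_zero.mpr (Nat.prime_of_mem_primesBelow hp).ne_zero)
    have := Real.log_le_log (by
      have : 0 < ∏ p ∈ (N + 1).primesBelow, p ^ (N / p) := by
        apply Finset.prod_pos
        intro p hp
        exact pow_pos (Nat.prime_of_mem_primesBelow hp).pos _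
      exact_mod_cast this) (show ((∏ p ∈ (N + 1).primesBelow, p ^ (N / p) : ℕ) : ℝ) ≤ (N ! : ℝ) by exact_mod_cast hle)
    rw [Nat.cast_prod] at this
    push_cast at this
    rw [Real.log_prod h0] at this
    simpa [Real.log_pow] using this
  have hfact : Real.log (N !) ≤ N * Real.log N := by
    calc Real.log (N !) ≤ Real.log ((N:ℕ) ^ N : ℕ) := by
          apply Real.log_le_log (by exact_mod_cast Nat.factorial_pos N)
          exact_mod_cast Nat.factorial_le_pow N
      _ = N * Real.log N := by push_cast; rw [Real.log_pow]
  -- primorial bound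
  have hprim : ∑ p ∈ (N + 1).primesBelow, Real.log p ≤ N * Real.log 4 := by
    have h1 : ∑ p ∈ (N + 1).primesBelow, Real.log p = Real.log (primorial N) := by
      rw [primorial, Nat.cast_prod, Real.log_prod]
      · rfl
      · intro p hp
        have := Nat.prime_of_mem_primesBelow hp
        exact Nat.cast_ne_zero.mpr this.ne_zero
    rw [h1]
    calc Real.log (primorial N) ≤ Real.log (4 ^ N : ℕ) := by
          apply Real.log_le_log (by exact_mod_cast primorial_pos N)
          exact_mod_cast primorial_le_4_pow N
      _ = N * Real.log 4 := by push_cast; rw [Real.log_pow]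
  -- combine:  for each p,  (N/p - 1) log p ≤ (⌊N/p⌋) log p
  have hkey : ∀ p ∈ (N + 1).primesBelow, (N : ℝ) / p * Real.log p - Real.log p
      ≤ ((N / p : ℕ) : ℝ) * Real.log p := by
    intro p hp
    have hpp := Nat.prime_of_mem_primesBelow hp
    have hplt : (0:ℝ) < p := by exact_mod_cast hpp.pos
    have hlogp : 0 ≤ Real.log p := Real.log_natCast_nonneg p
    have hfloor : (N : ℝ) / p - 1 ≤ ((N / p : ℕ) : ℝ) := by
      have hmod := Nat.div_add_mod N p
      have hmlt : N % p < p := Nat.mod_lt N hpp.pos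
      have : (N : ℝ) < p * ((N / p : ℕ) : ℝ) + p := by
        have : (N : ℝ) = p * ((N / p : ℕ) : ℝ) + ((N % p : ℕ) : ℝ) := by exact_mod_cast hmod.symm
        rw [this]
        have : ((N % p : ℕ) : ℝ) < p := by exact_mod_cast hmlt
        linarith
      rw [div_sub_one (ne_of_gt hplt), div_le_iff₀ hplt]
      nlinarith
    nlinarith [hfloor, hlogp]
  have hsum : ∑ p ∈ (N + 1).primesBelow, ((N:ℝ) / p * Real.log p - Real.log p)
      ≤ N * Real.log N := le_trans (Finset.sum_le_sum hkey) (le_trans hlog1 hfact)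
  rw [Finset.sum_sub_distrib] at hsum
  have hfinal : (N:ℝ) * ∑ p ∈ (N + 1).primesBelow, Real.log p / p
      ≤ N * Real.log N + N * Real.log 4 := by
    rw [Finset.mul_sum]
    have : ∀ p ∈ (N + 1).primesBelow, (N:ℝ) * (Real.log p / p) = (N:ℝ) / p * Real.log p := by
      intro p hp
      have hplt : (0:ℝ) < p := by exact_mod_cast (Nat.prime_of_mem_primesBelow hp).pos
      field_simp
    rw [Finset.sum_congr rfl this]
    linarith [hprim, hsum]
  have h2 : (N:ℝ) * ∑ p ∈ (N + 1).primesBelow, Real.log p / p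
      ≤ (N:ℝ) * (Real.log N + Real.log 4) := by linarith [hfinal]
  exact le_of_mul_le_mul_left h2 hNR
theorem key_log_ineq {a b : ℝ} (ha : 0 < a) (hab : a ≤ b) :
    (b - a) / b ≤ Real.log b - Real.log a := by
  have hb : 0 < b := lt_of_lt_of_le ha hab
  have h := Real.log_le_sub_one_of_pos (show 0 < a / b by positivity)
  rw [Real.log_div (ne_of_gt ha) (ne_of_gt hb)] at h
  have h2 : (b - a) / b = 1 - a / b := by field_simp
  linarith

theorem mertens_aux : ∀ N : ℕ, 2 ≤ N →
    ∑ p ∈ (N + 1).primesBelow, 1 / (p:ℝ)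
      ≤ (∑ p ∈ (N + 1).primesBelow, Real.log p / p) / Real.log N
        + Real.log (Real.log N) - Real.log (Real.log 2)
        + Real.log 4 / Real.log 2 - Real.log 4 / Real.log N := by
  intro N hN
  induction N, hN using Nat.le_induction with
  | base =>
    have h3 : (3:ℕ).primesBelow = {2} := by decide
    rw [h3]
    simp only [Finset.sum_singleton]
    have h2 : Real.log 2 ≠ 0 := by
      have := Real.log_pos (by norm_num : (1:ℝ) < 2)
      linarith
    rw [Nat.cast_ofNat]
    have e1 : Real.log 2 / 2 / Real.log 2 = 1/2 := by
      field_simp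
    rw [e1]
    ring_nf
    norm_num
  | succ N hN ih =>
    have hlog2 : (0:ℝ) < Real.log 2 := Real.log_pos (by norm_num)
    have ha : (0:ℝ) < Real.log N := by
      apply Real.log_pos
      exact_mod_cast lt_of_lt_of_le one_lt_two (by exact_mod_cast hN)
    have hb : (0:ℝ) < Real.log (N + 1) := by
      apply Real.log_pos
      have : (2:ℝ) ≤ N := by exact_mod_cast hN
      linarith
    have hab : Real.log N ≤ Real.log ((N:ℝ) + 1) := by
      apply Real.log_le_log (by positivity)
      linarith
    set F := ∑ p ∈ (N + 1).primesBelow, Real.log p / p with hF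
    have hcheb : F ≤ Real.log N + Real.log 4 := chebyshev_log_weighted N (by omega)
    have hkey : (F - Real.log 4) * (1 / Real.log N - 1 / Real.log ((N:ℝ) + 1))
        ≤ Real.log (Real.log ((N:ℝ) + 1)) - Real.log (Real.log N) := by
      have hmono : 0 ≤ 1 / Real.log N - 1 / Real.log ((N:ℝ) + 1) := by
        rw [sub_nonneg]
        apply one_div_le_one_div_of_le ha hab
      have hloglog : (Real.log ((N:ℝ)+1) - Real.log N) / Real.log ((N:ℝ)+1)
          ≤ Real.log (Real.log ((N:ℝ) + 1)) - Real.log (Real.log N) :=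
        key_log_ineq ha hab
      rcases le_or_gt F (Real.log 4) with h | h
      · have h5 : (F - Real.log 4) * (1 / Real.log N - 1 / Real.log ((N:ℝ) + 1)) ≤ 0 :=
          mul_nonpos_of_nonpos_of_nonneg (by linarith) hmono
        have hright : 0 ≤ Real.log (Real.log ((N:ℝ) + 1)) - Real.log (Real.log N) := by
          rw [sub_nonneg]
          exact Real.log_le_log ha hab
        linarith
      · have hFa : F - Real.log 4 ≤ Real.log N := by linarith
        have h1 : (F - Real.log 4) * (1 / Real.log N - 1 / Real.log ((N:ℝ) + 1))
            ≤ Real.log N * (1 / Real.log N - 1 / Real.log ((N:ℝ) + 1)) :=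
          mul_le_mul_of_nonneg_right hFa hmono
        have h2 : Real.log N * (1 / Real.log N - 1 / Real.log ((N:ℝ) + 1))
            = (Real.log ((N:ℝ)+1) - Real.log N) / Real.log ((N:ℝ)+1) := by
          field_simp
        linarith
    have goal2 : F / Real.log N - Real.log 4 / Real.log N + Real.log (Real.log N)
          ≤ F / Real.log ((N:ℝ) + 1) - Real.log 4 / Real.log ((N:ℝ) + 1)
            + Real.log (Real.log ((N:ℝ)+1)) := by
      have e : (F - Real.log 4) * (1 / Real.log N - 1 / Real.log ((N:ℝ) + 1))
          = (F / Real.log N - Real.log 4 / Real.log N)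
            - (F / Real.log ((N:ℝ) + 1) - Real.log 4 / Real.log ((N:ℝ) + 1)) := by
        ring
      linarith [hkey, e.ge, e.le]
    have hsplit : (N + 1 + 1).primesBelow
        = if (N+1).Prime then insert (N+1) ((N+1).primesBelow) else (N+1).primesBelow :=
      Nat.primesBelow_succ (N+1)
    have hnotmem : (N+1) ∉ (N+1).primesBelow := Nat.notMem_primesBelow (N+1)
    by_cases hp : (N+1).Prime
    · rw [hsplit, if_pos hp, Finset.sum_insert hnotmem, Finset.sum_insert hnotmem]
      push_cast
      have hNB : (0:ℝ) < (N:ℝ) + 1 := by positivity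
      have expand : (Real.log ((N:ℝ) + 1) / ((N:ℝ) + 1) + F) / Real.log ((N:ℝ) + 1)
          = 1 / ((N:ℝ) + 1) + F / Real.log ((N:ℝ) + 1) := by
        field_simp
      rw [expand]
      push_cast at ih
      linarith [ih]
    · rw [hsplit, if_neg hp]
      push_cast at ih ⊢
      linarith [ih, goal2]
theorem mertens_final (N : ℕ) (hN : 2 ≤ N) :
    ∑ p ∈ (N + 1).primesBelow, 1 / (p:ℝ) ≤ Real.log (Real.log N) + 6 := by
  have hlog2 : (0:ℝ) < Real.log 2 := Real.log_pos (by norm_num)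
  have ha : (0:ℝ) < Real.log N := by
    apply Real.log_pos
    exact_mod_cast lt_of_lt_of_le one_lt_two (by exact_mod_cast hN)
  have h2N : Real.log 2 ≤ Real.log N := by
    apply Real.log_le_log (by norm_num)
    exact_mod_cast hN
  have hcheb := chebyshev_log_weighted N (by omega)
  have hmer := mertens_aux N hN
  have hlog4 : Real.log 4 = 2 * Real.log 2 := by
    rw [show (4:ℝ) = 2^2 by norm_num, Real.log_pow]
    push_cast; ring
  have h1 : (∑ p ∈ (N + 1).primesBelow, Real.log p / p) / Real.log N
      ≤ 1 + Real.log 4 / Real.log N :=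
    calc (∑ p ∈ (N + 1).primesBelow, Real.log p / p) / Real.log N
        ≤ (Real.log N + Real.log 4) / Real.log N := by
          gcongr
      _ = 1 + Real.log 4 / Real.log N := by field_simp
  have h2 : Real.log 4 / Real.log 2 = 2 := by
    rw [hlog4]; field_simp
  have h3 : -Real.log (Real.log 2) ≤ 1 := by
    have hl2 : (1:ℝ)/2 ≤ Real.log 2 := by
      have := Real.log_two_gt_d9
      linarith
    have : Real.log (1/2) ≤ Real.log (Real.log 2) := Real.log_le_log (by norm_num) hl2
    rw [Real.log_div (by norm_num) (by norm_num), Real.log_one] at this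
    have hl2' : Real.log 2 ≤ 1 := by
      have := Real.log_two_lt_d9
      linarith
    linarith
  linarith
-- telescoping bound
theorem tele_eq : ∀ m : ℕ, 1 ≤ m → ∑ k ∈ Finset.Icc 2 m, (1/((k:ℝ)-1) - 1/k) = 1 - 1/m := by
  intro m hm
  induction m, hm using Nat.le_induction with
  | base => norm_num
  | succ m hm ih =>
    rw [Finset.sum_Icc_succ_top (by omega : 2 ≤ m + 1), ih]
    have hm' : (1:ℝ) ≤ (m:ℝ) := by exact_mod_cast hm
    have h1 : ((m + 1 : ℕ) : ℝ) = (m:ℝ) + 1 := by push_cast; ring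
    rw [h1]
    have hmne : (m:ℝ) ≠ 0 := by linarith
    have hm1ne : (m:ℝ) + 1 ≠ 0 := by linarith
    simp

theorem tele (m : ℕ) : ∑ k ∈ Finset.Icc 2 m, (1/((k:ℝ)-1) - 1/k) ≤ 1 := by
  rcases le_or_gt 1 m with h | h
  · rw [tele_eq m h]
    have : (0:ℝ) < m := by exact_mod_cast h
    have : 0 ≤ 1/(m:ℝ) := by positivity
    linarith
  · have : Finset.Icc 2 m = ∅ := by
      apply Finset.Icc_eq_empty
      omega
    simp [this]

theorem sum_inv_sub_one_le {n : ℕ} (hn : 0 < n) :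
    ∑ p ∈ n.primeFactors, (1/((p:ℝ)-1) - 1/p) ≤ 1 := by
  refine le_trans (Finset.sum_le_sum_of_subset_of_nonneg ?_ ?_) (tele n)
  · intro p hp
    have hpp := Nat.prime_of_mem_primeFactors hp
    have := Nat.le_of_dvd hn (Nat.dvd_of_mem_primeFactors hp)
    exact Finset.mem_Icc.mpr ⟨hpp.two_le, this⟩
  · intro k hk hk2
    have h2 : 2 ≤ k := (Finset.mem_Icc.mp hk).1
    have hk1 : (1:ℝ) ≤ (k:ℝ) - 1 := by
      have : (2:ℝ) ≤ k := by exact_mod_cast h2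
      linarith
    have : 1/(k:ℝ) ≤ 1/((k:ℝ)-1) := by
      apply one_div_le_one_div_of_le (by linarith)
      linarith
    linarith
noncomputable def c₀ : ℝ := Real.log (Real.log 3)

theorem c₀_pos : 0 < c₀ := by
  apply Real.log_pos
  have h := Real.exp_one_lt_d9
  have : Real.exp 1 < 3 := by linarith
  calc (1:ℝ) = Real.log (Real.exp 1) := by rw [Real.log_exp]
    _ < Real.log 3 := Real.log_lt_log (Real.exp_pos 1) this

theorem c₀_le_one : c₀ ≤ 1 := by
  rw [c₀]
  have h1 : Real.log 3 ≤ Real.exp 1 := by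
    have h2 : Real.log 3 ≤ Real.log 4 := Real.log_le_log (by norm_num) (by norm_num)
    have h3 : Real.log 4 = 2 * Real.log 2 := by
      rw [show (4:ℝ) = 2^2 by norm_num, Real.log_pow]; push_cast; ring
    have h4 := Real.log_two_lt_d9
    have h5 := Real.exp_one_gt_d9
    nlinarith
  have hpos : (0:ℝ) < Real.log 3 := Real.log_pos (by norm_num)
  calc Real.log (Real.log 3) ≤ Real.log (Real.exp 1) := Real.log_le_log hpos h1
    _ = 1 := Real.log_exp 1

theorem prime_factor_sum_bound {n : ℕ} (hn : 0 < n) :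
    ∑ p ∈ n.primeFactors, 1/((p:ℝ)-1)
      ≤ Real.log (Real.log (Real.log (3 * n))) + (7 + 1/c₀ - Real.log c₀) := by
  have hc₀ := c₀_pos
  set L : ℝ := Real.log (3 * n) with hLdef
  set M : ℝ := Real.log L with hMdef
  have h3n : (3:ℝ) ≤ 3 * n := by
    have : (1:ℝ) ≤ n := by exact_mod_cast hn
    linarith
  have hL3 : Real.log 3 ≤ L := Real.log_le_log (by norm_num) h3n
  have hL1 : 1 < L := by
    have h := Real.exp_one_lt_d9
    have h1 : (1:ℝ) = Real.log (Real.exp 1) := by rw [Real.log_exp]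
    have : Real.log (Real.exp 1) < Real.log 3 := Real.log_lt_log (Real.exp_pos 1) (by linarith)
    linarith
  have hM : c₀ ≤ M := Real.log_le_log (by
      have := c₀_pos
      have : (0:ℝ) < Real.log 3 := by
        apply Real.log_pos; norm_num
      exact this) hL3
  have hMpos : 0 < M := lt_of_lt_of_le hc₀ hM
  -- step 1: replace 1/(p-1) by 1/p
  have step1 : ∑ p ∈ n.primeFactors, 1/((p:ℝ)-1)
      ≤ ∑ p ∈ n.primeFactors, 1/(p:ℝ) + 1 := by
    have h := sum_inv_sub_one_le hn
    have : ∑ p ∈ n.primeFactors, 1/((p:ℝ)-1)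
        = ∑ p ∈ n.primeFactors, 1/(p:ℝ) + ∑ p ∈ n.primeFactors, (1/((p:ℝ)-1) - 1/p) := by
      rw [← Finset.sum_add_distrib]
      exact Finset.sum_congr rfl fun p _ => by ring
    linarith
  -- split at N₀ = ⌊L⌋
  set N₀ : ℕ := ⌊L⌋₊ with hN₀def
  have hsplit : ∑ p ∈ n.primeFactors, 1/(p:ℝ)
      = ∑ p ∈ n.primeFactors.filter (fun p => p ≤ N₀), 1/(p:ℝ)
        + ∑ p ∈ n.primeFactors.filter (fun p => ¬ p ≤ N₀), 1/(p:ℝ) :=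
    (Finset.sum_filter_add_sum_filter_not _ _ _).symm
  -- small part
  have hsmall : ∑ p ∈ n.primeFactors.filter (fun p => p ≤ N₀), 1/(p:ℝ)
      ≤ Real.log M + 6 - Real.log c₀ := by
    rcases le_or_gt 2 N₀ with h2 | h2
    · have hsub : n.primeFactors.filter (fun p => p ≤ N₀) ⊆ (N₀ + 1).primesBelow := by
        intro p hp
        rw [Finset.mem_filter] at hp
        exact Nat.mem_primesBelow.mpr ⟨by omega, Nat.prime_of_mem_primeFactors hp.1⟩
      have hle : ∑ p ∈ n.primeFactors.filter (fun p => p ≤ N₀), 1/(p:ℝ)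
          ≤ ∑ p ∈ (N₀ + 1).primesBelow, 1/(p:ℝ) := by
        apply Finset.sum_le_sum_of_subset_of_nonneg hsub
        intro p _ _
        positivity
      have hmer := mertens_final N₀ h2
      have hNL : (N₀:ℝ) ≤ L := Nat.floor_le (by linarith)
      have hNpos : (0:ℝ) < Real.log N₀ := by
        apply Real.log_pos
        exact_mod_cast lt_of_lt_of_le one_lt_two (by exact_mod_cast h2)
      have hmono : Real.log (Real.log N₀) ≤ Real.log M := by
        apply Real.log_le_log hNpos
        rw [hMdef]
        exact Real.log_le_log (by positivity) hNL
      have hlogc₀ : Real.log c₀ ≤ 0 := Real.log_nonpos (le_of_lt hc₀) c₀_le_one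
      linarith
    · have hempty : n.primeFactors.filter (fun p => p ≤ N₀) = ∅ := by
        apply Finset.filter_false_of_mem
        intro p hp
        have := (Nat.prime_of_mem_primeFactors hp).two_le
        omega
      rw [hempty]
      simp only [Finset.sum_empty]
      have h1 : Real.log c₀ ≤ Real.log M := Real.log_le_log hc₀ hM
      linarith
  -- big part
  have hbig : ∑ p ∈ n.primeFactors.filter (fun p => ¬ p ≤ N₀), 1/(p:ℝ) ≤ 1/c₀ := by
    have hLM : 0 < L * M := by positivity
    have hstep : ∀ p ∈ n.primeFactors.filter (fun p => ¬ p ≤ N₀),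
        1/(p:ℝ) ≤ Real.log p / (L * M) := by
      intro p hp
      rw [Finset.mem_filter] at hp
      have hplt : L < p := by
        have h1 : N₀ + 1 ≤ p := by omega
        have h2 : L < N₀ + 1 := Nat.lt_floor_add_one L
        have : ((N₀ + 1 : ℕ):ℝ) ≤ p := by exact_mod_cast h1
        push_cast at this
        linarith
      have hppos : (0:ℝ) < p := by linarith
      have hlogp : M ≤ Real.log p := Real.log_le_log (by linarith) (le_of_lt hplt)
      rw [div_le_div_iff₀ hppos hLM, one_mul]
      calc L * M ≤ (p:ℝ) * Real.log p := by
            apply mul_le_mul (le_of_lt hplt) hlogp (le_of_lt hMpos) (by linarith)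
        _ = Real.log p * p := by ring
    calc ∑ p ∈ n.primeFactors.filter (fun p => ¬ p ≤ N₀), 1/(p:ℝ)
        ≤ ∑ p ∈ n.primeFactors.filter (fun p => ¬ p ≤ N₀), Real.log p / (L * M) :=
          Finset.sum_le_sum hstep
      _ ≤ ∑ p ∈ n.primeFactors, Real.log p / (L * M) := by
          apply Finset.sum_le_sum_of_subset_of_nonneg (Finset.filter_subset _ _)
          intro p hp _
          have := (Nat.prime_of_mem_primeFactors hp).one_lt
          have hplt : (1:ℝ) < p := by exact_mod_cast this
          have : 0 ≤ Real.log p := Real.log_nonneg (le_of_lt hplt)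
          positivity
      _ = (∑ p ∈ n.primeFactors, Real.log p) / (L * M) := by
          rw [Finset.sum_div]
      _ ≤ L / (L * M) := by
          gcongr
          -- sum of logs of prime factors ≤ log n ≤ L
          have hrad : ∏ p ∈ n.primeFactors, p ∣ n := Nat.prod_primeFactors_dvd n
          have hradle : (∏ p ∈ n.primeFactors, p) ≤ n := Nat.le_of_dvd hn hrad
          have h1 : ∑ p ∈ n.primeFactors, Real.log p
              = Real.log ((∏ p ∈ n.primeFactors, p : ℕ) : ℝ) := by
            rw [Nat.cast_prod, Real.log_prod]
            intro p hp
            exact Nat.cast_ne_zero.mpr (Nat.prime_of_mem_primeFactors hp).ne_zero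
          rw [h1]
          calc Real.log ((∏ p ∈ n.primeFactors, p : ℕ) : ℝ)
              ≤ Real.log n := Real.log_le_log (by
                  exact_mod_cast Finset.prod_pos fun p hp => (Nat.prime_of_mem_primeFactors hp).pos)
                  (by exact_mod_cast hradle)
            _ ≤ L := Real.log_le_log (by exact_mod_cast hn) (by
                  push_cast
                  have : (0:ℝ) ≤ n := by positivity
                  linarith)
      _ = 1 / M := by
          field_simp
      _ ≤ 1 / c₀ := one_div_le_one_div_of_le hc₀ hM
  linarith [step1, hsplit.le, hsmall, hbig]
theorem sum_moebius_omega_div_totient (A : ℝ) (hA : 0 < A) :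
    ∃ C : ℝ, ∀ n : ℕ, 0 < n →
      (∑ d ∈ n.divisors, ((moebius d : ℝ)) ^ 2 * A ^ d.primeFactors.card / (Nat.totient d : ℝ))
        ≤ C * (Real.log (Real.log (3 * n))) ^ A := by
  refine ⟨Real.exp (A * (7 + 1/c₀ - Real.log c₀)), fun n hn => ?_⟩
  have hc₀ : 0 < c₀ := by
    apply Real.log_pos
    have h := Real.exp_one_lt_d9
    calc (1:ℝ) = Real.log (Real.exp 1) := (Real.log_exp 1).symm
      _ < Real.log 3 := Real.log_lt_log (Real.exp_pos 1) (by linarith)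
  set M : ℝ := Real.log (Real.log (3 * n)) with hM
  have hMpos : 0 < M := by
    rw [hM]
    apply lt_of_lt_of_le hc₀
    apply Real.log_le_log (Real.log_pos (by norm_num))
    apply Real.log_le_log (by norm_num)
    have : (1:ℝ) ≤ n := by exact_mod_cast hn
    linarith
  rw [sum_eq_prod A (Nat.pos_iff_ne_zero.mp hn)]
  have hfac : ∀ p ∈ n.primeFactors, (0:ℝ) ≤ 1 + A / ((p:ℝ) - 1) := by
    intro p hp
    have h2 : (2:ℝ) ≤ p := by exact_mod_cast (Nat.prime_of_mem_primeFactors hp).two_le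
    have : (0:ℝ) < (p:ℝ) - 1 := by linarith
    positivity
  have hprod : ∏ p ∈ n.primeFactors, (1 + A / ((p:ℝ) - 1))
      ≤ ∏ p ∈ n.primeFactors, Real.exp (A / ((p:ℝ) - 1)) := by
    apply Finset.prod_le_prod hfac
    intro p hp
    have := Real.add_one_le_exp (A / ((p:ℝ) - 1))
    linarith
  rw [← Real.exp_sum] at hprod
  have hsum : ∑ p ∈ n.primeFactors, A / ((p:ℝ) - 1)
      ≤ A * (Real.log M + (7 + 1/c₀ - Real.log c₀)) := by
    have h1 : ∑ p ∈ n.primeFactors, A / ((p:ℝ) - 1)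
        = A * ∑ p ∈ n.primeFactors, 1/((p:ℝ) - 1) := by
      rw [Finset.mul_sum]
      exact Finset.sum_congr rfl fun p _ => by ring
    rw [h1]
    apply mul_le_mul_of_nonneg_left _ (le_of_lt hA)
    exact prime_factor_sum_bound hn
  have hexp : Real.exp (∑ p ∈ n.primeFactors, A / ((p:ℝ) - 1))
      ≤ Real.exp (A * (Real.log M + (7 + 1/c₀ - Real.log c₀))) := Real.exp_le_exp.mpr hsum
  have hfinal : Real.exp (A * (Real.log M + (7 + 1/c₀ - Real.log c₀)))
      = Real.exp (A * (7 + 1/c₀ - Real.log c₀)) * M ^ A := by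
    rw [Real.rpow_def_of_pos hMpos, ← Real.exp_add]
    congr 1
    ring
  calc ∏ p ∈ n.primeFactors, (1 + A / ((p:ℝ) - 1))
      ≤ Real.exp (∑ p ∈ n.primeFactors, A / ((p:ℝ) - 1)) := hprod
    _ ≤ Real.exp (A * (Real.log M + (7 + 1/c₀ - Real.log c₀))) := hexp
    _ = Real.exp (A * (7 + 1/c₀ - Real.log c₀)) * M ^ A := hfinal
end

section
/- The double integral ∫_{1/10}^{1/3} (1/α) ∫_{1/3}^{(1-α)/2} dβ/(β(1-α-β)) dα is strictly less than 0.49254. -/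
open Set

lemma key {f f' : ℝ → ℝ} {b : ℝ} (hb : 0 ≤ b)
    (hd : ∀ x ∈ Icc (0:ℝ) b, HasDerivAt f (f' x) x)
    (hp : ∀ x ∈ Icc (0:ℝ) b, 0 ≤ f' x) : f 0 ≤ f b := by
  have h := monotoneOn_of_hasDerivWithinAt_nonneg (convex_Icc (0:ℝ) b)
    (fun x hx => (hd x hx).continuousAt.continuousWithinAt)
    (fun x hx => (hd x (interior_subset hx)).hasDerivWithinAt)
    (fun x hx => hp x (interior_subset hx))
  exact h (left_mem_Icc.2 hb) (right_mem_Icc.2 hb) hb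

lemma padeUB {t : ℝ} (h0 : 0 ≤ t) (h1 : t ≤ 1) :
    Real.log (1 + t) ≤ t * (6 + t) / (6 + 4 * t) := by
  have := key (f := fun x => x * (6 + x) / (6 + 4 * x) - Real.log (1 + x))
    (f' := fun x => 4 * x ^ 3 / ((6 + 4 * x) ^ 2 * (1 + x))) (b := t) h0
    (fun x hx => by
      obtain ⟨hx0, hx1⟩ := hx
      have hd1 : HasDerivAt (fun x : ℝ => x * (6 + x) / (6 + 4 * x))
          (((6 + 2 * x) * (6 + 4 * x) - x * (6 + x) * 4) / (6 + 4 * x) ^ 2) x := by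
        have h1 : HasDerivAt (fun x : ℝ => x * (6 + x)) (6 + 2 * x) x := by
          have := (hasDerivAt_id x).mul ((hasDerivAt_const x 6).add (hasDerivAt_id x))
          convert this using 1
          any_goals with_reducible_and_instances rfl
          · rfl
          all_goals simp <;> ring
        have h2 : HasDerivAt (fun x : ℝ => 6 + 4 * x) 4 x := by
          simpa [Pi.add_def] using (hasDerivAt_const x 6).add ((hasDerivAt_id x).const_mul 4)
        exact h1.div h2 (by nlinarith)
      have hd2 : HasDerivAt (fun x : ℝ => Real.log (1 + x)) (1 / (1 + x)) x := by
        have := ((hasDerivAt_const x 1).add (hasDerivAt_id x)).log (by simp; nlinarith)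
        simpa using this
      convert hd1.sub hd2 using 1
      any_goals with_reducible_and_instances rfl
      field_simp
      ring)
    (fun x hx => by
      obtain ⟨hx0, hx1⟩ := hx
      positivity)
  norm_num at this
  linarith [this]

lemma artanhLB {u : ℝ} (h0 : 0 ≤ u) (h1 : u ≤ 3/4) :
    2 * (u + u^3/3 + u^5/5 + u^7/7) ≤ Real.log (1 + u) - Real.log (1 - u) := by
  have := key (f := fun x => Real.log (1 + x) - Real.log (1 - x)
      - 2 * (x + x^3/3 + x^5/5 + x^7/7))
    (f' := fun x => 2 * x ^ 8 / (1 - x ^ 2)) (b := u) h0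
    (fun x hx => by
      obtain ⟨hx0, hx1⟩ := hx
      have hx2 : x < 1 := by linarith
      have hd1 : HasDerivAt (fun x : ℝ => Real.log (1 + x)) (1 / (1 + x)) x := by
        have := ((hasDerivAt_const x 1).add (hasDerivAt_id x)).log (by simp; nlinarith)
        simpa using this
      have hd2 : HasDerivAt (fun x : ℝ => Real.log (1 - x)) (-1 / (1 - x)) x := by
        have := ((hasDerivAt_const x 1).sub (hasDerivAt_id x)).log (by simp; nlinarith)
        simpa using this
      have hd3 : HasDerivAt (fun x : ℝ => 2 * (x + x^3/3 + x^5/5 + x^7/7))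
          (2 * (1 + x^2 + x^4 + x^6)) x := by
        have := (((hasDerivAt_id x).add (((hasDerivAt_pow 3 x).div_const 3))).add
          ((hasDerivAt_pow 5 x).div_const 5)).add ((hasDerivAt_pow 7 x).div_const 7)
        have := this.const_mul 2
        convert this using 1
        any_goals with_reducible_and_instances rfl
        simp
        try ring
      convert (hd1.sub hd2).sub hd3 using 1
      any_goals with_reducible_and_instances rfl
      have e1 : (1:ℝ) + x ≠ 0 := by nlinarith
      have e2 : (1:ℝ) - x ≠ 0 := by nlinarith
      have e3 : (1:ℝ) - x ^ 2 ≠ 0 := by nlinarith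
      field_simp
      ring)
    (fun x hx => by
      obtain ⟨hx0, hx1⟩ := hx
      have : x ^ 2 < 1 := by nlinarith
      have : (0:ℝ) < 1 - x ^ 2 := by linarith
      positivity)
  norm_num at this
  linarith [this]

lemma artanhUB {u : ℝ} (h0 : 0 ≤ u) (h1 : u ≤ 3/4) :
    Real.log (1 + u) - Real.log (1 - u)
      ≤ 2 * (u + u^3/3 + u^5/5) + 2 * u^7 / (7 * (1 - u^2)) := by
  have := key (f := fun x => 2 * (x + x^3/3 + x^5/5) + 2 * x^7 / (7 * (1 - x^2))
      - (Real.log (1 + x) - Real.log (1 - x)))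
    (f' := fun x => 4 * x ^ 8 / (7 * (1 - x ^ 2) ^ 2)) (b := u) h0
    (fun x hx => by
      obtain ⟨hx0, hx1⟩ := hx
      have hx2 : x < 1 := by linarith
      have e2 : (0:ℝ) < 1 - x ^ 2 := by nlinarith
      have hd1 : HasDerivAt (fun x : ℝ => Real.log (1 + x)) (1 / (1 + x)) x := by
        have := ((hasDerivAt_const x 1).add (hasDerivAt_id x)).log (by simp; nlinarith)
        simpa using this
      have hd2 : HasDerivAt (fun x : ℝ => Real.log (1 - x)) (-1 / (1 - x)) x := by
        have := ((hasDerivAt_const x 1).sub (hasDerivAt_id x)).log (by simp; nlinarith)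
        simpa using this
      have hd3 : HasDerivAt (fun x : ℝ => 2 * (x + x^3/3 + x^5/5))
          (2 * (1 + x^2 + x^4)) x := by
        have := (((hasDerivAt_id x).add (((hasDerivAt_pow 3 x).div_const 3))).add
          ((hasDerivAt_pow 5 x).div_const 5)).const_mul 2
        convert this using 1
        any_goals with_reducible_and_instances rfl
        simp
        try ring
      have hd4 : HasDerivAt (fun x : ℝ => 2 * x^7 / (7 * (1 - x^2)))
          ((2 * (7 * x^6) * (7 * (1 - x^2)) - 2 * x^7 * (7 * (-(2*x)))) / (7 * (1 - x^2))^2)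
          x := by
        have hnum : HasDerivAt (fun x : ℝ => 2 * x^7) (2 * (7 * x^6)) x := by
          have := (hasDerivAt_pow 7 x).const_mul 2
          convert this using 1
          any_goals with_reducible_and_instances rfl
          try norm_num
        have hden : HasDerivAt (fun x : ℝ => 7 * (1 - x^2)) (7 * (-(2*x))) x := by
          have := (((hasDerivAt_const x 1).sub (hasDerivAt_pow 2 x))).const_mul 7
          convert this using 1
          any_goals with_reducible_and_instances rfl
          try norm_num
          try ring
        exact hnum.div hden (by nlinarith)
      convert ((hd3.add hd4).sub (hd1.sub hd2)) using 1
      any_goals with_reducible_and_instances rfl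
      have e1 : (1:ℝ) + x ≠ 0 := by nlinarith
      have e3 : (1:ℝ) - x ≠ 0 := by nlinarith
      have e4 : (1:ℝ) - x ^ 2 ≠ 0 := ne_of_gt e2
      field_simp
      ring)
    (fun x hx => by
      obtain ⟨hx0, hx1⟩ := hx
      have : x ^ 2 < 1 := by nlinarith
      have : (0:ℝ) < 1 - x ^ 2 := by linarith
      positivity)
  norm_num at this
  linarith [this]

theorem double_integral_lt :
    (∫ α in (1/10 : ℝ)..(1/3 : ℝ),
      (1 / α) * ∫ β in (1/3 : ℝ)..((1 - α) / 2), 1 / (β * (1 - α - β)))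
      < 0.49254 := by
  have h10 : (1/10 : ℝ) ≤ 1/3 := by norm_num
  -- Step 1+2 : rewrite the integrand
  have hcongr : (∫ α in (1/10 : ℝ)..(1/3 : ℝ),
      (1 / α) * ∫ β in (1/3 : ℝ)..((1 - α) / 2), 1 / (β * (1 - α - β)))
      = ∫ α in (1/10 : ℝ)..(1/3 : ℝ), Real.log (2 - 3*α) / (α * (1 - α)) := by
    apply intervalIntegral.integral_congr
    intro α hα
    rw [Set.uIcc_of_le h10] at hα
    obtain ⟨ha1, ha2⟩ := hα
    have ha0 : (0:ℝ) < α := by linarith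
    have ha3 : (0:ℝ) < 1 - α := by linarith
    have hle : (1/3 : ℝ) ≤ (1 - α)/2 := by linarith
    have hinner : (∫ β in (1/3 : ℝ)..((1 - α)/2), 1 / (β * (1 - α - β)))
        = Real.log (2 - 3*α) / (1 - α) := by
      have heq := intervalIntegral.integral_eq_sub_of_hasDerivAt
        (f := fun β => (Real.log β - Real.log (1 - α - β)) / (1 - α))
        (f' := fun β => 1 / (β * (1 - α - β))) (a := (1/3:ℝ)) (b := (1-α)/2)
        (fun β hβ => by
          rw [Set.uIcc_of_le hle] at hβ
          obtain ⟨hb1, hb2⟩ := hβ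
          have hb0 : (0:ℝ) < β := by linarith
          have hb3 : (0:ℝ) < 1 - α - β := by linarith
          have d1 : HasDerivAt (fun β : ℝ => Real.log β) β⁻¹ β :=
            Real.hasDerivAt_log hb0.ne'
          have d2 : HasDerivAt (fun β : ℝ => Real.log (1 - α - β)) (-1 / (1 - α - β)) β := by
            have := ((hasDerivAt_const β (1-α)).sub (hasDerivAt_id β)).log hb3.ne'
            simpa using this
          have := (d1.sub d2).div_const (1 - α)
          convert this using 1
          any_goals with_reducible_and_instances rfl
          field_simp
          try ring
        )
        (by
          apply ContinuousOn.intervalIntegrable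
          apply ContinuousOn.div continuousOn_const
          · exact (continuous_id.mul (continuous_const.sub continuous_id)).continuousOn
          · intro β hβ
            rw [Set.uIcc_of_le hle] at hβ
            obtain ⟨hb1, hb2⟩ := hβ
            have hb0 : (0:ℝ) < β := by linarith
            have hb3 : (0:ℝ) < 1 - α - β := by linarith
            positivity)
      rw [heq]
      show (Real.log ((1-α)/2) - Real.log (1 - α - (1-α)/2)) / (1-α)
        - (Real.log (1/3) - Real.log (1 - α - 1/3)) / (1-α)
        = Real.log (2 - 3*α) / (1 - α)
      have h23 : (0:ℝ) < 2/3 - α := by linarith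
      have hl1 : (1:ℝ) - α - (1 - α)/2 = (1 - α)/2 := by ring
      have hl2 : (1:ℝ) - α - 1/3 = 2/3 - α := by ring
      rw [hl1, hl2, sub_self, zero_div, zero_sub]
      have hl3 : Real.log (2 - 3*α) = Real.log (2/3 - α) - Real.log (1/3) := by
        rw [show (2:ℝ) - 3*α = (2/3 - α)/(1/3) by ring,
          Real.log_div h23.ne' (by norm_num)]
      rw [hl3]
      ring
    show (1/α) * (∫ β in (1/3 : ℝ)..((1 - α)/2), 1 / (β * (1 - α - β)))
      = Real.log (2 - 3*α) / (α * (1 - α))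
    rw [hinner]
    field_simp
  rw [hcongr]
  -- the rational upper bound (partial fraction form)
  set h : ℝ → ℝ := fun α => 7/(10*α) + 4/(1-α) - 243/(10*(5-6*α)) with hh
  have hcont : ContinuousOn h (Set.uIcc (1/10 : ℝ) (1/3)) := by
    rw [Set.uIcc_of_le h10]
    apply ContinuousOn.sub
    apply ContinuousOn.add
    · exact ContinuousOn.div continuousOn_const (by fun_prop)
        (fun x hx => by
          obtain ⟨h1, h2⟩ := hx; intro hc; nlinarith)
    · exact ContinuousOn.div continuousOn_const (by fun_prop)
        (fun x hx => by
          obtain ⟨h1, h2⟩ := hx; intro hc; nlinarith)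
    · exact ContinuousOn.div continuousOn_const (by fun_prop)
        (fun x hx => by
          obtain ⟨h1, h2⟩ := hx; intro hc; nlinarith)
  have hGcont : ContinuousOn (fun α => Real.log (2 - 3*α) / (α * (1 - α)))
      (Set.uIcc (1/10 : ℝ) (1/3)) := by
    rw [Set.uIcc_of_le h10]
    apply ContinuousOn.div
    · apply ContinuousOn.log (by fun_prop)
      intro x hx; obtain ⟨h1, h2⟩ := hx; intro hc; nlinarith
    · fun_prop
    · intro x hx; obtain ⟨h1, h2⟩ := hx
      have : (0:ℝ) < x := by linarith
      have : (0:ℝ) < 1 - x := by linarith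
      positivity
  have hmono : (∫ α in (1/10 : ℝ)..(1/3 : ℝ), Real.log (2 - 3*α) / (α * (1 - α)))
      ≤ ∫ α in (1/10 : ℝ)..(1/3 : ℝ), h α := by
    apply intervalIntegral.integral_mono_on h10
      (hGcont.intervalIntegrable) (hcont.intervalIntegrable)
    intro α hα
    obtain ⟨ha1, ha2⟩ := hα
    have ha0 : (0:ℝ) < α := by linarith
    have ha3 : (0:ℝ) < 1 - α := by linarith
    have hp := padeUB (t := 1 - 3*α) (by linarith) (by linarith)
    have hp' : Real.log (2 - 3*α) ≤ (1 - 3*α) * (7 - 3*α) / (10 - 12*α) := by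
      have e : (1:ℝ) + (1 - 3*α) = 2 - 3*α := by ring
      rw [e] at hp
      calc Real.log (2 - 3*α) ≤ (1-3*α) * (6 + (1-3*α)) / (6 + 4*(1-3*α)) := hp
        _ = (1 - 3*α) * (7 - 3*α) / (10 - 12*α) := by ring_nf
    have hα10 : (0:ℝ) < 10 - 12*α := by linarith
    have ne3 : (5:ℝ) - 6*α ≠ 0 := by intro hc; nlinarith
    have heqh : h α = ((1 - 3*α) * (7 - 3*α) / (10 - 12*α)) / (α * (1 - α)) := by
      rw [hh]
      have : (5:ℝ) - α*6 ≠ 0 := by intro hc; apply ne3; linarith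
      have : (10:ℝ) - α*12 ≠ 0 := by intro hc; linarith
      field_simp
      ring
    rw [heqh]
    gcongr
  have hftc : (∫ α in (1/10 : ℝ)..(1/3 : ℝ), h α)
      = ((7/10)*Real.log (1/3) - 4*Real.log (1-1/3) + (81/20)*Real.log (5-6*(1/3)))
      - ((7/10)*Real.log (1/10) - 4*Real.log (1-1/10) + (81/20)*Real.log (5-6*(1/10))) := by
    apply intervalIntegral.integral_eq_sub_of_hasDerivAt
      (f := fun α => (7/10)*Real.log α - 4*Real.log (1-α) + (81/20)*Real.log (5-6*α))
    · intro x hx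
      rw [Set.uIcc_of_le h10] at hx
      obtain ⟨hx1', hx2'⟩ := hx
      have hx0 : (0:ℝ) < x := by linarith
      have hx1 : (0:ℝ) < 1 - x := by linarith
      have hx5 : (0:ℝ) < 5 - 6*x := by linarith
      have d1 := (Real.hasDerivAt_log hx0.ne').const_mul (7/10 : ℝ)
      have d2 : HasDerivAt (fun x : ℝ => Real.log (1-x)) (-1/(1-x)) x := by
        have := ((hasDerivAt_const x (1:ℝ)).sub (hasDerivAt_id x)).log hx1.ne'
        simpa using this
      have d3 : HasDerivAt (fun x : ℝ => Real.log (5-6*x)) (-6/(5-6*x)) x := by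
        have := ((hasDerivAt_const x (5:ℝ)).sub ((hasDerivAt_id x).const_mul 6)).log hx5.ne'
        simpa using this
      have dd := (d1.sub (d2.const_mul (4:ℝ))).add (d3.const_mul (81/20 : ℝ))
      convert dd using 1
      any_goals with_reducible_and_instances rfl
      show h x = _
      rw [hh]
      field_simp
      ring
    · exact hcont.intervalIntegrable
  have hb1 := artanhUB (u := (7:ℝ)/13) (by norm_num) (by norm_num)
  have hb2 := artanhUB (u := (7:ℝ)/47) (by norm_num) (by norm_num)
  have hb3 := artanhLB (u := (7:ℝ)/37) (by norm_num) (by norm_num)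
  have e1 : Real.log ((1:ℝ)/3) - Real.log (1/10)
      = Real.log (1 + 7/13) - Real.log (1 - 7/13) := by
    rw [← Real.log_div (by norm_num) (by norm_num),
      ← Real.log_div (by norm_num) (by norm_num)]
    norm_num
  have e2 : Real.log ((1:ℝ)-1/3) - Real.log (1-1/10)
      = Real.log (1 - 7/47) - Real.log (1 + 7/47) := by
    rw [← Real.log_div (by norm_num) (by norm_num),
      ← Real.log_div (by norm_num) (by norm_num)]
    norm_num
  have e3 : Real.log ((5:ℝ)-6*(1/3)) - Real.log (5-6*(1/10))
      = Real.log (1 - 7/37) - Real.log (1 + 7/37) := by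
    rw [← Real.log_div (by norm_num) (by norm_num),
      ← Real.log_div (by norm_num) (by norm_num)]
    norm_num
  have hfin : (∫ α in (1/10 : ℝ)..(1/3 : ℝ), h α) < 0.49254 := by
    rw [hftc]
    norm_num at hb1 hb2 hb3 e1 e2 e3 ⊢
    nlinarith [hb1, hb2, hb3, e1, e2, e3]
  calc (∫ α in (1/10 : ℝ)..(1/3 : ℝ), Real.log (2 - 3*α) / (α * (1 - α)))
      ≤ ∫ α in (1/10 : ℝ)..(1/3 : ℝ), h α := hmono
    _ < 0.49254 := hfin
end

section
/- Let f(a) be the indicator that a = p₁p₂ with N^{1/10} < p₁ ≤ N^{1/3} < p₂ ≤ (N/p₁)^{1/2}. For any integer d with 1 ≤ d ≤ N^{1/2}, ∑_{a : gcd(a,d) > 1} f(a)/a ≪ N^{-1/10}, with implied constant absolute. -/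
open Finset

lemma my_sum_union_le {α} [DecidableEq α] (s t : Finset α) (f : α → ℝ)
    (hf : ∀ a, 0 ≤ f a) : ∑ a ∈ s ∪ t, f a ≤ ∑ a ∈ s, f a + ∑ a ∈ t, f a := by
  have := Finset.sum_union_inter (s₁ := s) (s₂ := t) (f := f)
  have h2 : 0 ≤ ∑ a ∈ s ∩ t, f a := Finset.sum_nonneg fun a _ => hf a
  linarith

lemma my_sum_image_le {α β} [DecidableEq β] (s : Finset α) (f : α → β) (g : β → ℝ)
    (hg : ∀ b, 0 ≤ g b) : ∑ b ∈ s.image f, g b ≤ ∑ a ∈ s, g (f a) := by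
  classical
  induction s using Finset.induction_on with
  | empty => simp
  | insert a s h ih =>
    rw [Finset.image_insert, Finset.sum_insert h]
    by_cases hfa : f a ∈ s.image f
    · rw [Finset.insert_eq_self.2 hfa]
      have := hg (f a); linarith
    · rw [Finset.sum_insert hfa]; linarith

lemma my_sum_biUnion_le {ι α} [DecidableEq α] (s : Finset ι) (t : ι → Finset α) (f : α → ℝ)
    (hf : ∀ a, 0 ≤ f a) : ∑ a ∈ s.biUnion t, f a ≤ ∑ i ∈ s, ∑ a ∈ t i, f a := by
  classical
  induction s using Finset.induction_on with
  | empty => simp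
  | insert i s h ih =>
    rw [Finset.biUnion_insert, Finset.sum_insert h]
    exact (my_sum_union_le _ _ _ hf).trans (by linarith)

-- dyadic block bound
lemma block_card (k : ℕ) :
    k * ((Finset.Ioc (2^k) (2^(k+1))).filter Nat.Prime).card ≤ 2^(k+2) := by
  set B := (Finset.Ioc (2^k) (2^(k+1))).filter Nat.Prime with hB
  have hsub : B ⊆ (Finset.range (2^(k+1)+1)).filter Nat.Prime := by
    intro p hp
    simp only [hB, Finset.mem_filter, Finset.mem_Ioc, Finset.mem_range] at hp ⊢
    exact ⟨by omega, hp.2⟩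
  have h1 : ∏ p ∈ B, p ≤ primorial (2^(k+1)) :=
    Finset.prod_le_prod_of_subset_of_one_le' hsub
      (fun i hi _ => by
        simp only [Finset.mem_filter] at hi; exact hi.2.one_lt.le)
  have h2 : primorial (2^(k+1)) ≤ 4 ^ (2^(k+1)) := primorial_le_4_pow _
  have h3 : (4:ℕ) ^ (2^(k+1)) = 2 ^ (2^(k+2)) := by
    rw [show (4:ℕ) = 2^2 from rfl, ← pow_mul, pow_succ 2 (k+1), mul_comm]
  have h4 : (2^k) ^ B.card ≤ ∏ p ∈ B, p := by
    rw [← Finset.prod_const]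
    refine Finset.prod_le_prod' fun p hp => ?_
    simp only [hB, Finset.mem_filter, Finset.mem_Ioc] at hp
    exact hp.1.1.le
  have h5 : (2:ℕ)^(k * B.card) ≤ 2^(2^(k+2)) := by
    rw [pow_mul]; omega
  exact (Nat.pow_le_pow_iff_right one_lt_two).1 h5

lemma block_sum (k : ℕ) (hk : 1 ≤ k) :
    ∑ p ∈ (Finset.Ioc (2^k) (2^(k+1))).filter Nat.Prime, (1:ℝ)/p ≤ 4 / k := by
  set B := (Finset.Ioc (2^k) (2^(k+1))).filter Nat.Prime with hB
  have h2k : (0:ℝ) < 2^k := by positivity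
  have hstep : ∑ p ∈ B, (1:ℝ)/p ≤ B.card • ((1:ℝ)/2^k) := by
    refine Finset.sum_le_card_nsmul _ _ _ fun p hp => ?_
    simp only [hB, Finset.mem_filter, Finset.mem_Ioc] at hp
    have : (2:ℝ)^k ≤ p := by exact_mod_cast hp.1.1.le
    exact one_div_le_one_div_of_le h2k this
  have hcard : (B.card : ℝ) * k ≤ 2^(k+2) := by
    have := block_card k
    have : ((k * B.card : ℕ) : ℝ) ≤ ((2^(k+2) : ℕ) : ℝ) := by exact_mod_cast this
    push_cast at this; linarith
  have hkpos : (0:ℝ) < k := by exact_mod_cast hk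
  calc ∑ p ∈ B, (1:ℝ)/p ≤ B.card • ((1:ℝ)/2^k) := hstep
    _ = B.card * (1/2^k) := by rw [nsmul_eq_mul]
    _ ≤ (2^(k+2) / k) * (1/2^k) := by
        apply mul_le_mul_of_nonneg_right _ (by positivity)
        rw [le_div_iff₀ hkpos]; linarith
    _ = 4 / k := by
        rw [pow_succ, pow_succ]
        field_simp; ring

lemma rpow_two_pow (m : ℕ) (y : ℝ) : ((2:ℝ)^m)^y = (2:ℝ)^((m:ℝ)*y) := by
  rw [← Real.rpow_natCast 2 m, ← Real.rpow_mul (by norm_num)]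

open Classical in
lemma mertens_aux_s16 (N : ℕ) (hN : 2^20 ≤ N) :
    ∑ p ∈ (Finset.Icc 1 N).filter
      (fun p : ℕ => p.Prime ∧ (N:ℝ)^((1:ℝ)/10) < (p:ℝ) ∧ (p:ℝ) ≤ (N:ℝ)^((1:ℝ)/2)), (1:ℝ)/p ≤ 250 := by
  set L := Nat.log 2 N with hLdef
  have hL : 20 ≤ L := by
    have := Nat.log_mono_right (b := 2) hN
    rwa [Nat.log_pow one_lt_two] at this
  have hN0 : N ≠ 0 := by positivity
  have h2L : (2:ℕ)^L ≤ N := Nat.pow_log_le_self 2 hN0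
  have h2L' : N < 2^(L+1) := Nat.lt_pow_succ_log_self one_lt_two N
  set k₀ := (L - 9) / 10 with hk0
  set k₁ := L / 2 with hk1
  have hcover : (Finset.Icc 1 N).filter
      (fun p : ℕ => p.Prime ∧ (N:ℝ)^((1:ℝ)/10) < (p:ℝ) ∧ (p:ℝ) ≤ (N:ℝ)^((1:ℝ)/2)) ⊆
      (Finset.Icc k₀ k₁).biUnion (fun k => (Finset.Ioc (2^k) (2^(k+1))).filter Nat.Prime) := by
    intro p hp
    simp only [Finset.mem_filter, Finset.mem_Icc] at hp
    obtain ⟨⟨hp1, hpN⟩, hprime, hlow, hhigh⟩ := hp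
    set k := Nat.log 2 p with hkdef
    have hp0 : p ≠ 0 := hprime.pos.ne'
    have hpk : 2^k ≤ p := Nat.pow_log_le_self 2 hp0
    have hpk' : p < 2^(k+1) := Nat.lt_pow_succ_log_self one_lt_two p
    -- p > 4
    have h4 : 4 < p := by
      have h1 : ((2:ℝ)^(20:ℕ))^((1:ℝ)/10) ≤ (N:ℝ)^((1:ℝ)/10) := by
        apply Real.rpow_le_rpow (by positivity) _ (by norm_num)
        exact_mod_cast hN
      have h2 : ((2:ℝ)^(20:ℕ))^((1:ℝ)/10) = 4 := by
        rw [rpow_two_pow]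
        norm_num
      have : (4:ℝ) < p := lt_of_le_of_lt (h2 ▸ h1) hlow
      exact_mod_cast this
    -- L ≤ 10k+9
    have hkl : L ≤ 10*k + 9 := by
      have c1 : (2:ℝ)^((L:ℝ)*((1:ℝ)/10)) ≤ (N:ℝ)^((1:ℝ)/10) := by
        rw [← rpow_two_pow]
        apply Real.rpow_le_rpow (by positivity) _ (by norm_num)
        exact_mod_cast h2L
      have c2 : (p:ℝ) < (2:ℝ)^(((k:ℝ)+1)*(1:ℝ)) := by
        rw [mul_one, show ((k:ℝ)+1) = ((k+1:ℕ):ℝ) by push_cast; ring, Real.rpow_natCast]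
        exact_mod_cast hpk'
      have h3 := (Real.rpow_lt_rpow_left_iff (x := 2) (by norm_num)).1
        (lt_of_le_of_lt c1 (hlow.trans_le c2.le))
      have h5 : (L:ℝ) < 10*(k:ℝ) + 10 := by linarith
      have h6 : L < 10*k + 10 := by exact_mod_cast h5
      omega
    -- 2k ≤ L
    have hku : 2*k ≤ L := by
      have c1 : ((2:ℝ)^k : ℝ) = (2:ℝ)^((k:ℝ)*(1:ℝ)) := by rw [mul_one, Real.rpow_natCast]
      have c2 : (N:ℝ)^((1:ℝ)/2) < (2:ℝ)^(((L:ℝ)+1)*((1:ℝ)/2)) := by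
        rw [show ((L:ℝ)+1) = ((L+1:ℕ):ℝ) by push_cast; ring, ← rpow_two_pow]
        apply Real.rpow_lt_rpow (by positivity) _ (by norm_num)
        exact_mod_cast h2L'
      have c3 : ((2:ℝ)^k : ℝ) ≤ (p:ℝ) := by exact_mod_cast hpk
      have h3 := (Real.rpow_lt_rpow_left_iff (x := 2) (by norm_num)).1
        ((c1 ▸ c3).trans_lt (lt_of_le_of_lt hhigh c2))
      have h5 : 2*(k:ℝ) < (L:ℝ) + 1 := by linarith
      have h6 : 2*k < L + 1 := by exact_mod_cast h5
      omega
    -- p ≠ 2^k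
    have hne : 2^k < p := by
      rcases lt_or_eq_of_le hpk with h | h
      · exact h
      · exfalso
        have hk2 : 2 ≤ k := by
          by_contra hc
          interval_cases k <;> omega
        have hdvd : 2 ∣ p := by rw [← h]; exact dvd_pow_self 2 (by omega)
        rcases (Nat.Prime.eq_one_or_self_of_dvd hprime 2 hdvd) with h' | h' <;> omega
    simp only [Finset.mem_biUnion, Finset.mem_Icc, Finset.mem_filter, Finset.mem_Ioc]
    exact ⟨k, ⟨by omega, by omega⟩, ⟨hne, by omega⟩, hprime⟩
  calc ∑ p ∈ ((Finset.Icc 1 N).filter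
        (fun p : ℕ => p.Prime ∧ (N:ℝ)^((1:ℝ)/10) < (p:ℝ) ∧ (p:ℝ) ≤ (N:ℝ)^((1:ℝ)/2))), (1:ℝ)/p
      ≤ ∑ p ∈ (Finset.Icc k₀ k₁).biUnion
          (fun k => (Finset.Ioc (2^k) (2^(k+1))).filter Nat.Prime), (1:ℝ)/p := by
        apply Finset.sum_le_sum_of_subset_of_nonneg hcover
        intro i _ _; positivity
    _ ≤ ∑ k ∈ Finset.Icc k₀ k₁, ∑ p ∈ (Finset.Ioc (2^k) (2^(k+1))).filter Nat.Prime, (1:ℝ)/p :=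
        my_sum_biUnion_le _ _ _ (fun a => by positivity)
    _ ≤ ∑ k ∈ Finset.Icc k₀ k₁, (4 / (k₀:ℝ)) := by
        apply Finset.sum_le_sum
        intro k hk
        simp only [Finset.mem_Icc] at hk
        have hk01 : 1 ≤ k₀ := by omega
        refine (block_sum k (by omega)).trans ?_
        apply div_le_div_of_nonneg_left (by norm_num) (by exact_mod_cast hk01)
        exact_mod_cast hk.1
    _ = ((Finset.Icc k₀ k₁).card : ℝ) * (4 / k₀) := by rw [Finset.sum_const, nsmul_eq_mul]
    _ ≤ 250 := by
        rw [Nat.card_Icc]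
        have hk01 : 1 ≤ k₀ := by omega
        have hnat : 4 * (k₁ + 1 - k₀) ≤ 250 * k₀ := by omega
        have hk0r : (0:ℝ) < (k₀:ℝ) := by exact_mod_cast hk01
        rw [mul_comm, div_mul_eq_mul_div, div_le_iff₀ hk0r]
        exact_mod_cast hnat


set_option maxHeartbeats 1000000 in
open Classical in
theorem sum_f_gcd_gt_one :
    ∃ C : ℝ, ∀ N : ℕ, 2 ≤ N → ∀ d : ℕ, 1 ≤ d → (d : ℝ) ≤ (N : ℝ) ^ ((1:ℝ)/2) →
      (∑ a ∈ Finset.Icc 1 N,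
        if 1 < Nat.gcd a d ∧ ∃ p₁ p₂ : ℕ, p₁.Prime ∧ p₂.Prime ∧ a = p₁ * p₂ ∧
            (N : ℝ) ^ ((1:ℝ)/10) < (p₁ : ℝ) ∧ (p₁ : ℝ) ≤ (N : ℝ) ^ ((1:ℝ)/3) ∧
            (N : ℝ) ^ ((1:ℝ)/3) < (p₂ : ℝ) ∧ (p₂ : ℝ) ≤ ((N : ℝ) / p₁) ^ ((1:ℝ)/2)
        then (1 : ℝ) / a else 0)
        ≤ C * (N : ℝ) ^ (-(1:ℝ)/10) := by
  classical
  use 4200000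
  intro N hN2 d hd1 hdN
  have hNpos : (0:ℝ) < N := by positivity
  have hN1 : (1:ℝ) ≤ N := by exact_mod_cast Nat.one_le_iff_ne_zero.mpr (by omega)
  have hN1' : (1:ℝ) < N := by exact_mod_cast hN2
  have hexp : (-(1:ℝ)/10) = -((1:ℝ)/10) := by norm_num
  have hεdef : (N:ℝ) ^ (-(1:ℝ)/10) = ((N:ℝ) ^ ((1:ℝ)/10))⁻¹ := by
    rw [hexp, Real.rpow_neg hNpos.le]
  have hr10pos : (0:ℝ) < (N:ℝ) ^ ((1:ℝ)/10) := Real.rpow_pos_of_pos hNpos _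
  have hεpos : (0:ℝ) < (N:ℝ) ^ (-(1:ℝ)/10) := Real.rpow_pos_of_pos hNpos _
  by_cases hbig : 2^20 ≤ N
  · -- main case
    set D₁ := d.divisors.filter (fun p : ℕ => p.Prime ∧ (N:ℝ)^((1:ℝ)/10) < (p:ℝ)) with hD₁
    set P := (Finset.Icc 1 N).filter
      (fun p : ℕ => p.Prime ∧ (N:ℝ)^((1:ℝ)/10) < (p:ℝ) ∧ (p:ℝ) ≤ (N:ℝ)^((1:ℝ)/2)) with hP
    set U := ((D₁ ×ˢ P) ∪ (P ×ˢ D₁)).image (fun pq : ℕ × ℕ => pq.1 * pq.2) with hU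
    -- exponent comparisons
    have e1 : (N:ℝ)^((1:ℝ)/10) ≤ (N:ℝ)^((1:ℝ)/3) :=
      Real.rpow_le_rpow_of_exponent_le hN1 (by norm_num)
    have e2 : (N:ℝ)^((1:ℝ)/3) ≤ (N:ℝ)^((1:ℝ)/2) :=
      Real.rpow_le_rpow_of_exponent_le hN1 (by norm_num)
    have e3 : (N:ℝ)^((1:ℝ)/2) ≤ (N:ℝ) := by
      nth_rewrite 2 [← Real.rpow_one (N:ℝ)]
      exact Real.rpow_le_rpow_of_exponent_le hN1 (by norm_num)
    -- membership claim
    have hmem : ∀ a ∈ Finset.Icc 1 N,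
        (1 < Nat.gcd a d ∧ ∃ p₁ p₂ : ℕ, p₁.Prime ∧ p₂.Prime ∧ a = p₁ * p₂ ∧
            (N : ℝ) ^ ((1:ℝ)/10) < (p₁ : ℝ) ∧ (p₁ : ℝ) ≤ (N : ℝ) ^ ((1:ℝ)/3) ∧
            (N : ℝ) ^ ((1:ℝ)/3) < (p₂ : ℝ) ∧ (p₂ : ℝ) ≤ ((N : ℝ) / p₁) ^ ((1:ℝ)/2)) →
        a ∈ U := by
      intro a _ ⟨hgcd, p₁, p₂, hp₁, hp₂, hae, h1, h2, h3, h4⟩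
      obtain ⟨q, hq, hqdvd⟩ := Nat.exists_prime_and_dvd (n := Nat.gcd a d) (by omega)
      have hqa : q ∣ a := hqdvd.trans (Nat.gcd_dvd_left a d)
      have hqd : q ∣ d := hqdvd.trans (Nat.gcd_dvd_right a d)
      have hp₁R1 : (1:ℝ) ≤ (p₁:ℝ) := by exact_mod_cast hp₁.one_lt.le
      have hdivN : ((N:ℝ)/p₁) ≤ (N:ℝ) := div_le_self hNpos.le hp₁R1
      have h4' : (p₂:ℝ) ≤ (N:ℝ)^((1:ℝ)/2) :=
        h4.trans (Real.rpow_le_rpow (by positivity) hdivN (by norm_num))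
      have hcase : q = p₁ ∨ q = p₂ := by
        rcases (Nat.Prime.dvd_mul hq).1 (hae ▸ hqa) with h | h
        · exact Or.inl ((Nat.prime_dvd_prime_iff_eq hq hp₁).1 h)
        · exact Or.inr ((Nat.prime_dvd_prime_iff_eq hq hp₂).1 h)
      have hp₂P : p₂ ∈ P := by
        rw [hP, Finset.mem_filter, Finset.mem_Icc]
        refine ⟨⟨hp₂.one_lt.le, ?_⟩, hp₂, lt_of_le_of_lt e1 h3, h4'⟩
        exact_mod_cast h4'.trans e3
      have hp₁P : p₁ ∈ P := by
        rw [hP, Finset.mem_filter, Finset.mem_Icc]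
        refine ⟨⟨hp₁.one_lt.le, ?_⟩, hp₁, h1, h2.trans e2⟩
        exact_mod_cast (h2.trans e2).trans e3
      rcases hcase with rfl | rfl
      · refine Finset.mem_image.2 ⟨(q, p₂), Finset.mem_union_left _ ?_, hae.symm⟩
        rw [Finset.mem_product]
        refine ⟨?_, hp₂P⟩
        rw [hD₁, Finset.mem_filter, Nat.mem_divisors]
        exact ⟨⟨hqd, by omega⟩, hp₁, h1⟩
      · refine Finset.mem_image.2 ⟨(p₁, q), Finset.mem_union_right _ ?_, hae.symm⟩
        rw [Finset.mem_product]
        refine ⟨hp₁P, ?_⟩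
        rw [hD₁, Finset.mem_filter, Nat.mem_divisors]
        exact ⟨⟨hqd, by omega⟩, hp₂, lt_of_le_of_lt e1 h3⟩
    -- card of D₁
    have hcard : D₁.card ≤ 5 := by
      by_contra hc
      push_neg at hc
      have hdvd : (∏ p ∈ D₁, p) ∣ d := by
        refine Finset.prod_primes_dvd d (fun p hp => ?_) (fun p hp => ?_)
        · rw [hD₁, Finset.mem_filter] at hp; exact hp.2.1.prime
        · rw [hD₁, Finset.mem_filter, Nat.mem_divisors] at hp; exact hp.1.1
      have hle : (∏ p ∈ D₁, p) ≤ d := Nat.le_of_dvd (by omega) hdvd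
      have hleR : ((∏ p ∈ D₁, p : ℕ) : ℝ) ≤ (N:ℝ)^((1:ℝ)/2) := by
        calc ((∏ p ∈ D₁, p : ℕ) : ℝ) ≤ (d:ℝ) := by exact_mod_cast hle
          _ ≤ (N:ℝ)^((1:ℝ)/2) := hdN
      have hlow : ((N:ℝ)^((1:ℝ)/10)) ^ D₁.card ≤ ((∏ p ∈ D₁, p : ℕ) : ℝ) := by
        rw [Nat.cast_prod, ← Finset.prod_const]
        refine Finset.prod_le_prod (fun p _ => hr10pos.le) (fun p hp => ?_)
        rw [hD₁, Finset.mem_filter] at hp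
        exact hp.2.2.le
      have h1r : (1:ℝ) ≤ (N:ℝ)^((1:ℝ)/10) := by
        rw [show (1:ℝ) = (N:ℝ)^(0:ℝ) by rw [Real.rpow_zero]]
        exact Real.rpow_le_rpow_of_exponent_le hN1 (by norm_num)
      have h6 : ((N:ℝ)^((1:ℝ)/10)) ^ (6:ℕ) ≤ ((N:ℝ)^((1:ℝ)/10)) ^ D₁.card :=
        pow_le_pow_right₀ h1r (by omega)
      have h7 : ((N:ℝ)^((1:ℝ)/10)) ^ (6:ℕ) = (N:ℝ)^((6:ℝ)/10) := by
        rw [← Real.rpow_natCast ((N:ℝ)^((1:ℝ)/10)) 6, ← Real.rpow_mul hNpos.le]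
        norm_num
      have hcontra : (N:ℝ)^((6:ℝ)/10) ≤ (N:ℝ)^((1:ℝ)/2) :=
        h7 ▸ (h6.trans (hlow.trans hleR))
      have := (Real.rpow_le_rpow_left_iff hN1').1 hcontra
      norm_num at this
    -- sum over D₁
    have hDsum : ∑ p ∈ D₁, (1:ℝ)/p ≤ 5 * ((N:ℝ) ^ (-(1:ℝ)/10)) := by
      have : ∑ p ∈ D₁, (1:ℝ)/p ≤ D₁.card • ((N:ℝ) ^ (-(1:ℝ)/10)) := by
        refine Finset.sum_le_card_nsmul _ _ _ (fun p hp => ?_)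
        rw [hD₁, Finset.mem_filter] at hp
        rw [hεdef, one_div]
        exact inv_anti₀ hr10pos hp.2.2.le
      refine this.trans ?_
      rw [nsmul_eq_mul]
      exact mul_le_mul_of_nonneg_right (by exact_mod_cast hcard) hεpos.le
    have hPsum : ∑ p ∈ P, (1:ℝ)/p ≤ 250 := mertens_aux_s16 N hbig
    have hDnonneg : (0:ℝ) ≤ ∑ p ∈ D₁, (1:ℝ)/p := Finset.sum_nonneg fun p _ => by positivity
    have hPnonneg : (0:ℝ) ≤ ∑ p ∈ P, (1:ℝ)/p := Finset.sum_nonneg fun p _ => by positivity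
    -- chain
    calc (∑ a ∈ Finset.Icc 1 N,
        if 1 < Nat.gcd a d ∧ ∃ p₁ p₂ : ℕ, p₁.Prime ∧ p₂.Prime ∧ a = p₁ * p₂ ∧
            (N : ℝ) ^ ((1:ℝ)/10) < (p₁ : ℝ) ∧ (p₁ : ℝ) ≤ (N : ℝ) ^ ((1:ℝ)/3) ∧
            (N : ℝ) ^ ((1:ℝ)/3) < (p₂ : ℝ) ∧ (p₂ : ℝ) ≤ ((N : ℝ) / p₁) ^ ((1:ℝ)/2)
        then (1 : ℝ) / a else 0)
        ≤ ∑ a ∈ Finset.Icc 1 N, (if a ∈ U then (1:ℝ)/a else 0) := by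
          refine Finset.sum_le_sum (fun a ha => ?_)
          split_ifs with hc hm hm
          · exact le_refl _
          · exact absurd (hmem a ha hc) hm
          · positivity
          · exact le_refl _
      _ = ∑ a ∈ (Finset.Icc 1 N).filter (· ∈ U), (1:ℝ)/a := (Finset.sum_filter _ _).symm
      _ ≤ ∑ a ∈ U, (1:ℝ)/a := by
          refine Finset.sum_le_sum_of_subset_of_nonneg (fun a ha => (Finset.mem_filter.1 ha).2)
            (fun a _ _ => by positivity)
      _ ≤ ∑ pq ∈ (D₁ ×ˢ P) ∪ (P ×ˢ D₁), (1:ℝ)/((pq.1 * pq.2 : ℕ):ℝ) := by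
          rw [hU]
          exact my_sum_image_le _ _ (fun b : ℕ => (1:ℝ)/(b:ℝ)) (fun b => by positivity)
      _ ≤ (∑ pq ∈ D₁ ×ˢ P, (1:ℝ)/((pq.1 * pq.2 : ℕ):ℝ))
          + ∑ pq ∈ P ×ˢ D₁, (1:ℝ)/((pq.1 * pq.2 : ℕ):ℝ) :=
          my_sum_union_le _ _ _ (fun pq => by positivity)
      _ = (∑ p ∈ D₁, (1:ℝ)/p) * (∑ p ∈ P, (1:ℝ)/p)
          + (∑ p ∈ P, (1:ℝ)/p) * (∑ p ∈ D₁, (1:ℝ)/p) := by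
          rw [Finset.sum_mul_sum, Finset.sum_mul_sum, Finset.sum_product, Finset.sum_product]
          congr 1 <;> refine Finset.sum_congr rfl (fun p _ => Finset.sum_congr rfl (fun q _ => ?_)) <;>
            · push_cast
              rw [div_mul_div_comm, one_mul]
      _ ≤ (5 * ((N:ℝ) ^ (-(1:ℝ)/10))) * 250 + 250 * (5 * ((N:ℝ) ^ (-(1:ℝ)/10))) := by
          have h1 : (∑ p ∈ D₁, (1:ℝ)/p) * (∑ p ∈ P, (1:ℝ)/p) ≤ (5 * ((N:ℝ) ^ (-(1:ℝ)/10))) * 250 :=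
            mul_le_mul hDsum hPsum hPnonneg (by positivity)
          have h2 : (∑ p ∈ P, (1:ℝ)/p) * (∑ p ∈ D₁, (1:ℝ)/p) ≤ 250 * (5 * ((N:ℝ) ^ (-(1:ℝ)/10))) :=
            mul_le_mul hPsum hDsum hDnonneg (by norm_num)
          linarith
      _ ≤ 4200000 * ((N:ℝ) ^ (-(1:ℝ)/10)) := by nlinarith [hεpos.le]
  · -- small N
    push_neg at hbig
    have hsum : (∑ a ∈ Finset.Icc 1 N,
        if 1 < Nat.gcd a d ∧ ∃ p₁ p₂ : ℕ, p₁.Prime ∧ p₂.Prime ∧ a = p₁ * p₂ ∧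
            (N : ℝ) ^ ((1:ℝ)/10) < (p₁ : ℝ) ∧ (p₁ : ℝ) ≤ (N : ℝ) ^ ((1:ℝ)/3) ∧
            (N : ℝ) ^ ((1:ℝ)/3) < (p₂ : ℝ) ∧ (p₂ : ℝ) ≤ ((N : ℝ) / p₁) ^ ((1:ℝ)/2)
        then (1 : ℝ) / a else 0) ≤ (N:ℝ) := by
      have : ∀ a ∈ Finset.Icc 1 N,
          (if 1 < Nat.gcd a d ∧ ∃ p₁ p₂ : ℕ, p₁.Prime ∧ p₂.Prime ∧ a = p₁ * p₂ ∧
            (N : ℝ) ^ ((1:ℝ)/10) < (p₁ : ℝ) ∧ (p₁ : ℝ) ≤ (N : ℝ) ^ ((1:ℝ)/3) ∧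
            (N : ℝ) ^ ((1:ℝ)/3) < (p₂ : ℝ) ∧ (p₂ : ℝ) ≤ ((N : ℝ) / p₁) ^ ((1:ℝ)/2)
          then (1 : ℝ) / a else 0) ≤ 1 := by
        intro a ha
        rw [Finset.mem_Icc] at ha
        have ha1 : (1:ℝ) ≤ a := by exact_mod_cast ha.1
        split_ifs
        · rw [div_le_one (by linarith)]; linarith
        · norm_num
      calc _ ≤ (Finset.Icc 1 N).card • (1:ℝ) := Finset.sum_le_card_nsmul _ _ _ this
        _ = (N:ℝ) := by rw [nsmul_eq_mul, mul_one, Nat.card_Icc]; norm_num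
    refine hsum.trans ?_
    -- N ≤ 4200000 * N^{-1/10}
    have key : (N:ℝ) * (N:ℝ)^((1:ℝ)/10) ≤ 4194304 := by
      have h1 : (N:ℝ) * (N:ℝ)^((1:ℝ)/10) = (N:ℝ)^((11:ℝ)/10) := by
        nth_rewrite 1 [← Real.rpow_one (N:ℝ)]
        rw [← Real.rpow_add hNpos]; norm_num
      have h2 : (N:ℝ) ≤ (2:ℝ)^(20:ℕ) := by
        have : (N:ℝ) ≤ ((2^20 : ℕ):ℝ) := by exact_mod_cast hbig.le
        push_cast at this; exact_mod_cast this
      have h3 : (N:ℝ)^((11:ℝ)/10) ≤ ((2:ℝ)^(20:ℕ))^((11:ℝ)/10) :=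
        Real.rpow_le_rpow hNpos.le h2 (by norm_num)
      have h4 : ((2:ℝ)^(20:ℕ))^((11:ℝ)/10) = 4194304 := by
        rw [rpow_two_pow]
        norm_num
      rw [h1]; rw [h4] at h3; exact h3
    rw [hεdef, ← div_eq_mul_inv, le_div_iff₀ hr10pos]
    exact key.trans (by norm_num)
end
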